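/- arXiv:1803.05875 — 2 statements merged into one kernel-verified Lean document; each statement's English description precedes it below -/
import Mathlib

section
/- In the Gaussian sequence model $y_k = b_k\theta_k + \varepsilon\xi_k$, let $T_D = \sum_{k=1}^D b_k^{-2}(y_k^2 - \varepsilon^2)$ and threshold $t = C_1 \varepsilon^2 \sqrt{\sum_{k=1}^D b_k^{-4}}$ with $C_1 > 0$. Suppose $C > C_1$ satisfies $(2 + 4C)/(C - C_1)^2 \leq \beta$ and $\varepsilon \leq 1$ and $\max_{1\le l\le D} b_l^{-2} \leq \sqrt{\sum_{k=1}^D b_k^{-4}}$. If $\sum_{k=1}^D \theta_k^2 > C \varepsilon^2 \sqrt{\sum_{k=1}^D b_k^{-4}}$, then $\mathbb{P}_\theta(T_D \leq t) \leq \beta$. -/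
open MeasureTheory ProbabilityTheory Finset Real

local notation "M" n => ∫ x : ℝ, x ^ n * rexp (-(2⁻¹:ℝ) * x ^ 2)

lemma ig (n : ℕ) : Integrable (fun x : ℝ => x ^ n * rexp (-(2⁻¹:ℝ) * x ^ 2)) := by
  have h := integrable_rpow_mul_exp_neg_mul_sq (by norm_num : (0:ℝ) < 2⁻¹) (s := (n:ℝ))
    (by exact_mod_cast neg_one_lt_zero.trans_le (Nat.cast_nonneg n))
  simpa [Real.rpow_natCast] using h

lemma gmoment_rec (n : ℕ) :
    (M (n+2)) = ((n:ℝ)+1) * (M n) := by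
  have hderiv : ∀ x : ℝ, HasDerivAt (fun x : ℝ => x ^ (n+1) * rexp (-(2⁻¹:ℝ) * x ^ 2))
      ((((n:ℝ)+1) * (x ^ n * rexp (-(2⁻¹:ℝ) * x ^ 2))) - x ^ (n+2) * rexp (-(2⁻¹:ℝ) * x ^ 2)) x := by
    intro x
    have h1 : HasDerivAt (fun x : ℝ => x ^ (n+1)) (((n:ℝ)+1) * x ^ n) x := by
      have := hasDerivAt_pow (n+1) x
      simpa using this
    have h2 : HasDerivAt (fun x : ℝ => rexp (-(2⁻¹:ℝ) * x ^ 2))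
        (rexp (-(2⁻¹:ℝ) * x ^ 2) * (-(2⁻¹:ℝ) * (2 * x ^ 1))) x :=
      (((hasDerivAt_pow 2 x).const_mul (-(2⁻¹:ℝ))).exp)
    refine (h1.mul h2).congr_deriv ?_
    ring
  have hint : Integrable (fun x : ℝ => (((n:ℝ)+1) * (x ^ n * rexp (-(2⁻¹:ℝ) * x ^ 2))) - x ^ (n+2) * rexp (-(2⁻¹:ℝ) * x ^ 2)) := by
    exact ((ig n).const_mul _).sub (ig (n+2))
  have h0 := integral_eq_zero_of_hasDerivAt_of_integrable hderiv hint (ig (n+1))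
  rw [integral_sub ((ig n).const_mul _) (ig (n+2)), integral_const_mul] at h0
  linarith

lemma gmoment1 : (M 1) = 0 := by
  have hderiv : ∀ x : ℝ, HasDerivAt (fun x : ℝ => -rexp (-(2⁻¹:ℝ) * x ^ 2))
      (x ^ 1 * rexp (-(2⁻¹:ℝ) * x ^ 2)) x := by
    intro x
    have h2 : HasDerivAt (fun x : ℝ => rexp (-(2⁻¹:ℝ) * x ^ 2))
        (rexp (-(2⁻¹:ℝ) * x ^ 2) * (-(2⁻¹:ℝ) * (2 * x ^ 1))) x :=
      (((hasDerivAt_pow 2 x).const_mul (-(2⁻¹:ℝ))).exp)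
    refine h2.neg.congr_deriv ?_
    ring
  have hf : Integrable (fun x : ℝ => -rexp (-(2⁻¹:ℝ) * x ^ 2)) := by
    exact ((ig 0).neg).congr (ae_of_all _ fun x => by simp)
  exact integral_eq_zero_of_hasDerivAt_of_integrable hderiv (ig 1) hf

lemma gmoment2 : (M 2) = (M 0) := by
  have h := gmoment_rec 0
  rw [h]; norm_num

lemma gmoment3 : (M 3) = 0 := by
  have h := gmoment_rec 1
  rw [h, gmoment1, mul_zero]

lemma gmoment4 : (M 4) = 3 * (M 0) := by
  have h := gmoment_rec 2
  rw [h, gmoment2]; norm_num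

lemma pdf_eq (x : ℝ) : gaussianPDFReal 0 1 x = (Real.sqrt (2*π))⁻¹ * rexp (-(2⁻¹:ℝ) * x ^ 2) := by
  simp only [gaussianPDFReal, NNReal.coe_one, mul_one, sub_zero]
  ring_nf

lemma cM0 : (Real.sqrt (2*π))⁻¹ * (M 0) = 1 := by
  have h := integral_gaussianPDFReal_eq_one 0 (one_ne_zero (α := NNReal))
  simp only [pdf_eq] at h
  rw [integral_const_mul] at h
  simpa using h

lemma pdf_eq' (x : ℝ) : gaussianPDFReal 0 1 x = (Real.sqrt (2*π))⁻¹ * rexp (-(2⁻¹:ℝ) * x ^ 2) := by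
  simp only [gaussianPDFReal, NNReal.coe_one, mul_one, sub_zero]
  ring_nf

lemma integral_gr (g : ℝ → ℝ) :
    ∫ x, g x ∂(gaussianReal 0 1)
      = (Real.sqrt (2*π))⁻¹ * ∫ x, rexp (-(2⁻¹:ℝ) * x ^ 2) * g x := by
  rw [gaussianReal_of_var_ne_zero _ one_ne_zero]
  have hmeas : Measurable fun x => (gaussianPDFReal 0 1 x).toNNReal :=
    (measurable_gaussianPDFReal 0 1).real_toNNReal
  have hd : gaussianPDF 0 1 = fun x => ((gaussianPDFReal 0 1 x).toNNReal : ENNReal) := rfl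
  rw [hd, integral_withDensity_eq_integral_smul hmeas g]
  have heq : ∀ x : ℝ, (gaussianPDFReal 0 1 x).toNNReal • g x
      = (Real.sqrt (2*π))⁻¹ * (rexp (-(2⁻¹:ℝ) * x ^ 2) * g x) := by
    intro x
    rw [NNReal.smul_def, smul_eq_mul, Real.coe_toNNReal _ (gaussianPDFReal_nonneg 0 1 x), pdf_eq']
    ring
  rw [integral_congr_ae (ae_of_all _ heq), integral_const_mul]

lemma integrable_gr {g : ℝ → ℝ}
    (hg : Integrable (fun x => rexp (-(2⁻¹:ℝ) * x ^ 2) * g x)) :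
    Integrable g (gaussianReal 0 1) := by
  rw [gaussianReal_of_var_ne_zero _ one_ne_zero]
  have hmeas : Measurable fun x => (gaussianPDFReal 0 1 x).toNNReal :=
    (measurable_gaussianPDFReal 0 1).real_toNNReal
  have hd : gaussianPDF 0 1 = fun x => ((gaussianPDFReal 0 1 x).toNNReal : ENNReal) := rfl
  rw [hd, integrable_withDensity_iff_integrable_smul hmeas]
  have heq : ∀ x : ℝ, (Real.sqrt (2*π))⁻¹ * (rexp (-(2⁻¹:ℝ) * x ^ 2) * g x)
      = (gaussianPDFReal 0 1 x).toNNReal • g x := by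
    intro x
    rw [NNReal.smul_def, smul_eq_mul, Real.coe_toNNReal _ (gaussianPDFReal_nonneg 0 1 x), pdf_eq']
    ring
  exact (hg.const_mul _).congr (ae_of_all _ heq)

lemma grpow_int (n : ℕ) : Integrable (fun x : ℝ => x ^ n) (gaussianReal 0 1) :=
  integrable_gr ((ig n).congr (ae_of_all _ fun x => mul_comm _ _))

lemma gr_moment (n : ℕ) :
    ∫ x, x ^ n ∂(gaussianReal 0 1) = (Real.sqrt (2*π))⁻¹ * (M n) := by
  rw [integral_gr]
  congr 1
  exact integral_congr_ae (ae_of_all _ fun x => mul_comm _ _)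

lemma gr_moment1 : ∫ x, x ^ 1 ∂(gaussianReal 0 1) = 0 := by
  rw [gr_moment, gmoment1, mul_zero]
lemma gr_moment2 : ∫ x, x ^ 2 ∂(gaussianReal 0 1) = 1 := by
  rw [gr_moment, gmoment2, cM0]
lemma gr_moment3 : ∫ x, x ^ 3 ∂(gaussianReal 0 1) = 0 := by
  rw [gr_moment, gmoment3, mul_zero]
lemma gr_moment4 : ∫ x, x ^ 4 ∂(gaussianReal 0 1) = 3 := by
  rw [gr_moment, gmoment4, ← mul_assoc, mul_comm _ (3:ℝ), mul_assoc, cM0, mul_one]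

section Omega
variable {Ω : Type*} [MeasurableSpace Ω] (μ : Measure Ω) [IsProbabilityMeasure μ]
  (ξ : ℕ → Ω → ℝ) (hmeas : ∀ k, Measurable (ξ k))
  (hlaw : ∀ k, μ.map (ξ k) = gaussianReal 0 1)
include hmeas hlaw



lemma xi_pow_int (k n : ℕ) : Integrable (fun ω => (ξ k ω) ^ n) μ := by
  have hgm : Measurable fun x : ℝ => x ^ n := measurable_id.pow_const n
  have h : Integrable (fun x : ℝ => x ^ n) (μ.map (ξ k)) := by
    rw [hlaw k]; exact grpow_int n
  exact (integrable_map_measure hgm.aestronglyMeasurable (hmeas k).aemeasurable).mp h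

lemma xi_moment (k n : ℕ) : ∫ ω, (ξ k ω) ^ n ∂μ = ∫ x, x ^ n ∂(gaussianReal 0 1) := by
  have hgm : Measurable fun x : ℝ => x ^ n := measurable_id.pow_const n
  rw [← hlaw k]
  exact (integral_map (hmeas k).aemeasurable hgm.aestronglyMeasurable).symm

lemma poly4_int (a0 a1 a2 a3 a4 : ℝ) (k : ℕ) :
    Integrable (fun ω => a0 + a1 * ξ k ω + a2 * ξ k ω ^ 2 + a3 * ξ k ω ^ 3 + a4 * ξ k ω ^ 4) μ := by
  have h1 := (xi_pow_int μ ξ hmeas hlaw k 1).const_mul a1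
  have h2 := (xi_pow_int μ ξ hmeas hlaw k 2).const_mul a2
  have h3 := (xi_pow_int μ ξ hmeas hlaw k 3).const_mul a3
  have h4 := (xi_pow_int μ ξ hmeas hlaw k 4).const_mul a4
  simp only [pow_one] at h1
  exact ((((integrable_const a0).add h1).add h2).add h3).add h4

lemma poly4_integral (a0 a1 a2 a3 a4 : ℝ) (k : ℕ) :
    ∫ ω, (a0 + a1 * ξ k ω + a2 * ξ k ω ^ 2 + a3 * ξ k ω ^ 3 + a4 * ξ k ω ^ 4) ∂μ
      = a0 + a2 + 3 * a4 := by
  have h1 := (xi_pow_int μ ξ hmeas hlaw k 1).const_mul a1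
  have h2 := (xi_pow_int μ ξ hmeas hlaw k 2).const_mul a2
  have h3 := (xi_pow_int μ ξ hmeas hlaw k 3).const_mul a3
  have h4 := (xi_pow_int μ ξ hmeas hlaw k 4).const_mul a4
  simp only [pow_one] at h1
  have i0 : Integrable (fun ω => a0 + a1 * ξ k ω) μ := (integrable_const a0).add h1
  have i1 : Integrable (fun ω => a0 + a1 * ξ k ω + a2 * ξ k ω ^ 2) μ := i0.add h2
  have i2 : Integrable (fun ω => a0 + a1 * ξ k ω + a2 * ξ k ω ^ 2 + a3 * ξ k ω ^ 3) μ := i1.add h3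
  have E4 : ∫ ω, a0 + a1 * ξ k ω + a2 * ξ k ω ^ 2 + a3 * ξ k ω ^ 3 + a4 * ξ k ω ^ 4 ∂μ
      = (∫ ω, a0 + a1 * ξ k ω + a2 * ξ k ω ^ 2 + a3 * ξ k ω ^ 3 ∂μ) + ∫ ω, a4 * ξ k ω ^ 4 ∂μ :=
    integral_add i2 h4
  have E3 : ∫ ω, a0 + a1 * ξ k ω + a2 * ξ k ω ^ 2 + a3 * ξ k ω ^ 3 ∂μ
      = (∫ ω, a0 + a1 * ξ k ω + a2 * ξ k ω ^ 2 ∂μ) + ∫ ω, a3 * ξ k ω ^ 3 ∂μ := integral_add i1 h3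
  have E2 : ∫ ω, a0 + a1 * ξ k ω + a2 * ξ k ω ^ 2 ∂μ
      = (∫ ω, a0 + a1 * ξ k ω ∂μ) + ∫ ω, a2 * ξ k ω ^ 2 ∂μ := integral_add i0 h2
  have E1 : ∫ ω, a0 + a1 * ξ k ω ∂μ = (∫ ω, (a0:ℝ) ∂μ) + ∫ ω, a1 * ξ k ω ∂μ :=
    integral_add (integrable_const a0) h1
  have M1 : ∫ ω, a1 * ξ k ω ∂μ = a1 * ∫ ω, ξ k ω ∂μ := integral_const_mul _ _
  have M2 : ∫ ω, a2 * ξ k ω ^ 2 ∂μ = a2 * ∫ ω, ξ k ω ^ 2 ∂μ := integral_const_mul _ _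
  have M3 : ∫ ω, a3 * ξ k ω ^ 3 ∂μ = a3 * ∫ ω, ξ k ω ^ 3 ∂μ := integral_const_mul _ _
  have M4 : ∫ ω, a4 * ξ k ω ^ 4 ∂μ = a4 * ∫ ω, ξ k ω ^ 4 ∂μ := integral_const_mul _ _
  have e1 : ∫ ω, ξ k ω ∂μ = 0 := by
    have h := xi_moment μ ξ hmeas hlaw k 1
    simp only [pow_one] at h
    rw [h]; simpa using gr_moment1
  rw [E4, E3, E2, E1, M1, M2, M3, M4, e1, xi_moment μ ξ hmeas hlaw k 2,
    xi_moment μ ξ hmeas hlaw k 3, xi_moment μ ξ hmeas hlaw k 4,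
    gr_moment2, gr_moment3, gr_moment4, integral_const]
  simp [measure_univ]
  ring

end Omega

lemma arith (β C C1 r m v : ℝ) (hC1 : 0 < C1) (hCC1 : C1 < C)
    (hβ : (2 + 4 * C) / (C - C1)^2 ≤ β) (hr : 0 < r) (hm : C * r < m)
    (hv : v ≤ 2*r^2 + 4*r*m) :
    v / (m - C1 * r)^2 ≤ β := by
  have h2 : 0 < C - C1 := sub_pos.2 hCC1
  have hC0 : 0 < C := hC1.trans hCC1
  have hc : 0 < m - C1 * r := by nlinarith
  have key : (2*r^2 + 4*r*m) / (m - C1*r)^2 ≤ (2 + 4*C)/(C - C1)^2 := by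
    rw [div_le_div_iff₀ (by positivity) (by positivity)]
    nlinarith [sq_nonneg (m - C*r), mul_nonneg (mul_nonneg (sub_nonneg.2 hm.le) h2.le) hr.le,
      mul_nonneg (mul_nonneg (mul_nonneg (sub_nonneg.2 hm.le) h2.le) hr.le) hC0.le,
      mul_nonneg (mul_nonneg (mul_nonneg (sub_nonneg.2 hm.le) h2.le) hr.le) hC1.le,
      mul_nonneg (sq_nonneg (m - C*r)) hC0.le]
  calc v / (m - C1*r)^2 ≤ (2*r^2 + 4*r*m) / (m - C1*r)^2 :=
        (div_le_div_iff_of_pos_right (by positivity)).mpr hv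
    _ ≤ (2 + 4*C)/(C - C1)^2 := key
    _ ≤ β := hβ

set_option maxHeartbeats 1000000 in
/-- Type-II error bound for the inverse chi-square test: if the signal energy on the first `D`
frequencies exceeds `C ε² √(∑ b_k⁻⁴)` then `P_θ(T_D ≤ t) ≤ β`. -/
theorem stmt2 {Ω : Type*} [MeasurableSpace Ω] (μ : Measure Ω) [IsProbabilityMeasure μ]
    (ξ : ℕ → Ω → ℝ) (hmeas : ∀ k, Measurable (ξ k))
    (hindep : iIndepFun ξ μ)
    (hlaw : ∀ k, μ.map (ξ k) = gaussianReal 0 1)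
    (b θ : ℕ → ℝ) (hb : ∀ k, 0 < b k)
    (ε : ℝ) (hε : 0 < ε) (hε1 : ε ≤ 1)
    (D : ℕ) (hD : 1 ≤ D)
    (β C C1 : ℝ) (hC1 : 0 < C1) (hCC1 : C1 < C)
    (hβ : (2 + 4 * C) / (C - C1)^2 ≤ β)
    (hmax : ∀ l ∈ Finset.Icc 1 D,
      ((b l)^2)⁻¹ ≤ Real.sqrt (∑ k ∈ Finset.Icc 1 D, ((b k)^4)⁻¹))
    (henergy : C * ε^2 * Real.sqrt (∑ k ∈ Finset.Icc 1 D, ((b k)^4)⁻¹)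
        < ∑ k ∈ Finset.Icc 1 D, (θ k)^2) :
    μ {ω | ∑ k ∈ Finset.Icc 1 D, ((b k * θ k + ε * ξ k ω)^2 - ε^2) / (b k)^2
        ≤ C1 * ε^2 * Real.sqrt (∑ k ∈ Finset.Icc 1 D, ((b k)^4)⁻¹)}
      ≤ ENNReal.ofReal β := by
  set S := ∑ k ∈ Finset.Icc 1 D, ((b k)^4)⁻¹ with hSdef
  set s := Real.sqrt S with hsdef
  set m := ∑ k ∈ Finset.Icc 1 D, (θ k)^2 with hmdef
  have hbne : ∀ k, (b k) ≠ 0 := fun k => (hb k).ne'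
  set X : ℕ → Ω → ℝ := fun k ω => ((b k * θ k + ε * ξ k ω)^2 - ε^2)/(b k)^2 with hXdef
  have hXpoly : ∀ k, X k = fun ω => (θ k^2 - ε^2/(b k)^2) + (2*θ k*ε/(b k)) * ξ k ω
      + (ε^2/(b k)^2) * ξ k ω ^ 2 + 0 * ξ k ω ^ 3 + 0 * ξ k ω ^ 4 := by
    intro k; funext ω
    have hbk : (b k) ≠ 0 := hbne k
    show ((b k * θ k + ε * ξ k ω)^2 - ε^2)/(b k)^2 = _
    field_simp
    ring
  have hXint : ∀ k, Integrable (X k) μ := by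
    intro k; rw [hXpoly k]; exact poly4_int μ ξ hmeas hlaw _ _ _ _ _ k
  have hEX : ∀ k, ∫ ω, X k ω ∂μ = θ k ^ 2 := by
    intro k
    simp only [hXpoly k]
    rw [poly4_integral μ ξ hmeas hlaw (θ k^2 - ε^2/(b k)^2) (2*θ k*ε/(b k)) (ε^2/(b k)^2) 0 0 k]
    ring
  have hXsq : ∀ k, Integrable (fun ω => X k ω ^ 2) μ := by
    intro k
    have h := poly4_int μ ξ hmeas hlaw
      ((θ k^2 - ε^2/(b k)^2)^2)
      (2*(θ k^2 - ε^2/(b k)^2)*(2*θ k*ε/(b k)))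
      ((2*θ k*ε/(b k))^2 + 2*(θ k^2 - ε^2/(b k)^2)*(ε^2/(b k)^2))
      (2*(2*θ k*ε/(b k))*(ε^2/(b k)^2))
      ((ε^2/(b k)^2)^2) k
    refine h.congr (ae_of_all _ fun ω => ?_)
    simp only [hXpoly k]
    ring
  have hEXsq : ∀ k, ∫ ω, X k ω ^ 2 ∂μ
      = ((θ k^2 - ε^2/(b k)^2)^2)
        + ((2*θ k*ε/(b k))^2 + 2*(θ k^2 - ε^2/(b k)^2)*(ε^2/(b k)^2))
        + 3 * ((ε^2/(b k)^2)^2) := by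
    intro k
    rw [← poly4_integral μ ξ hmeas hlaw
      ((θ k^2 - ε^2/(b k)^2)^2)
      (2*(θ k^2 - ε^2/(b k)^2)*(2*θ k*ε/(b k)))
      ((2*θ k*ε/(b k))^2 + 2*(θ k^2 - ε^2/(b k)^2)*(ε^2/(b k)^2))
      (2*(2*θ k*ε/(b k))*(ε^2/(b k)^2))
      ((ε^2/(b k)^2)^2) k]
    refine integral_congr_ae (ae_of_all _ fun ω => ?_)
    simp only [hXpoly k]
    ring
  have hXm : ∀ k, Measurable (X k) := by
    intro k
    exact (((measurable_const.add (measurable_const.mul (hmeas k))).pow_const 2).sub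
      measurable_const).div_const _
  have hmem : ∀ k, MemLp (X k) 2 μ := by
    intro k
    exact (memLp_two_iff_integrable_sq (hXm k).aestronglyMeasurable).2 (hXsq k)
  have hvar : ∀ k, variance (X k) μ
      = 4*ε^2*(θ k^2 * ((b k)^2)⁻¹) + 2*ε^4*((b k)^4)⁻¹ := by
    intro k
    rw [variance_eq_sub (hmem k)]
    have h2 : μ[(X k)^2] = ∫ ω, X k ω ^ 2 ∂μ := rfl
    rw [h2, hEXsq k]
    have h3 : μ[X k] = ∫ ω, X k ω ∂μ := rfl
    rw [h3, hEX k]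
    have hbk : (b k) ≠ 0 := hbne k
    field_simp
    ring
  -- independence of the X's
  have hpair : Set.Pairwise ↑(Finset.Icc 1 D) (fun i j => IndepFun (X i) (X j) μ) := by
    intro i _ j _ hij
    have gi : Measurable (fun x : ℝ => ((b i * θ i + ε * x)^2 - ε^2)/(b i)^2) :=
      (((measurable_const.add (measurable_const.mul measurable_id)).pow_const 2).sub
        measurable_const).div_const _
    have gj : Measurable (fun x : ℝ => ((b j * θ j + ε * x)^2 - ε^2)/(b j)^2) :=
      (((measurable_const.add (measurable_const.mul measurable_id)).pow_const 2).sub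
        measurable_const).div_const _
    exact (hindep.indepFun hij).comp gi gj
  set F : Ω → ℝ := ∑ k ∈ Finset.Icc 1 D, X k with hFdef
  have hFapp : ∀ ω, F ω = ∑ k ∈ Finset.Icc 1 D, X k ω := by
    intro ω; rw [hFdef]; exact Finset.sum_apply ω _ X
  have hFmem : MemLp F 2 μ := memLp_finset_sum' _ fun k _ => hmem k
  have hEF : μ[F] = m := by
    have h1 : μ[F] = ∫ ω, ∑ k ∈ Finset.Icc 1 D, X k ω ∂μ :=
      integral_congr_ae (ae_of_all _ fun ω => hFapp ω)
    rw [h1, integral_finset_sum _ fun k _ => hXint k, hmdef]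
    exact Finset.sum_congr rfl fun k _ => hEX k
  set Q := ∑ k ∈ Finset.Icc 1 D, θ k^2 * ((b k)^2)⁻¹ with hQdef
  have hVarF : variance F μ = 4*ε^2*Q + 2*ε^4*S := by
    rw [hFdef, IndepFun.variance_sum (fun k _ => hmem k) hpair,
      Finset.sum_congr rfl fun k _ => hvar k, Finset.sum_add_distrib,
      ← Finset.mul_sum, ← Finset.mul_sum, hQdef, hSdef]
  -- positivity facts
  have hSpos : 0 < S := by
    rw [hSdef]
    refine Finset.sum_pos (fun k _ => by have := hb k; positivity) ⟨1, ?_⟩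
    simp [hD]
  have hspos : 0 < s := Real.sqrt_pos.2 hSpos
  have hs2 : s^2 = S := Real.sq_sqrt hSpos.le
  have hrpos : 0 < ε^2*s := by positivity
  have hCm : C * ε^2 * s < m := henergy
  have hcpos : 0 < m - C1 * ε^2 * s := by nlinarith
  -- Chebyshev
  have hcheb := meas_ge_le_variance_div_sq (μ := μ) hFmem hcpos
  have hsub : {ω | ∑ k ∈ Finset.Icc 1 D, ((b k * θ k + ε * ξ k ω)^2 - ε^2) / (b k)^2
        ≤ C1 * ε^2 * s}
      ⊆ {ω | m - C1 * ε^2 * s ≤ |F ω - μ[F]|} := by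
    intro ω hω
    simp only [Set.mem_setOf_eq] at hω ⊢
    have hTω : F ω ≤ C1 * ε^2 * s := by rw [hFapp ω]; exact hω
    refine le_abs.mpr (Or.inr ?_)
    rw [hEF]
    linarith
  refine le_trans (measure_mono hsub) (le_trans hcheb (ENNReal.ofReal_le_ofReal ?_))
  have hQle : Q ≤ s * m := by
    rw [hQdef, hmdef, Finset.mul_sum]
    refine Finset.sum_le_sum fun k hk => ?_
    have h := hmax k hk
    nlinarith [sq_nonneg (θ k)]
  have hvle : variance F μ ≤ 2*(ε^2*s)^2 + 4*(ε^2*s)*m := by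
    rw [hVarF]
    have h4 : ε^4*S = (ε^2*s)^2 := by rw [mul_pow, ← hs2]; ring
    nlinarith [sq_nonneg ε]
  have hassoc : C1 * ε^2 * s = C1 * (ε^2*s) := by ring
  rw [hassoc]
  exact arith β C C1 (ε^2*s) m (variance F μ) hC1 hCC1 hβ hrpos (by rw [← mul_assoc]; exact hCm) hvle
end

section
/- Suppose for all $\varepsilon\in(0,1)$: (a) $C_{\max}\varepsilon^2\sqrt{\sum_{k=1}^{D_\varepsilon}b_k^{-4}} < r_\varepsilon^2$, and (b) for all $\theta$ with $\theta_k = 0$ for $k \leq D_\varepsilon$ and $\sum_{k=1}^{D_\varepsilon}\theta_k^2 \leq C_{\min}\varepsilon^2\sqrt{\sum_{k=1}^{D_\varepsilon} b_k^{-4}}$, one has $\mathbb{P}_\theta(\Delta_\varepsilon = 0) > \beta$. Then every decimation-stable set $\mathcal{H}$ contained in the maxiset $MS(\Delta, r)$ satisfies $\mathcal{H} \subseteq \mathcal{F}^{dec}_{\sqrt{2}r, D}(C_{\min})$, i.e., if $\theta \in \mathcal{H}$ then for all $\varepsilon \in (0,1)$, $\sum_{k>D_\varepsilon}\theta_k^2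 < 2r_\varepsilon^2 - C_{\min}\varepsilon^2\sqrt{\sum_{k=1}^{D_\varepsilon}b_k^{-4}}$. -/
open MeasureTheory Finset

/-- Every decimation-stable subset `𝓗` of the maxiset `MS(Δ,r)` is contained in
`𝓕^dec_{√2 r, D}(C_min)`, under assumptions (a) and (b). -/
theorem stmt11 {Ω : Type*} [MeasurableSpace Ω] (P : (ℕ → ℝ) → Measure Ω)
    (Δ : ℝ → Ω → Bool) (β : ℝ) (hβ : β ∈ Set.Ioo (0:ℝ) (1/2))
    (b : ℕ → ℝ) (hb : ∀ k, 0 < b k)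
    (D : ℝ → ℕ) (hD : ∀ ε, 1 ≤ D ε)
    (r : ℝ → ℝ) (hr : ∀ ε ∈ Set.Ioo (0:ℝ) 1, 0 < r ε)
    (Cmin Cmax : ℝ) (hCmin : 0 < Cmin) (hle : Cmin ≤ Cmax)
    (ha : ∀ ε ∈ Set.Ioo (0:ℝ) 1,
      Cmax * ε^2 * Real.sqrt (∑ k ∈ Finset.Icc 1 (D ε), ((b k)^4)⁻¹) < (r ε)^2)
    (hb2 : ∀ ε ∈ Set.Ioo (0:ℝ) 1, ∀ θ : ℕ → ℝ, (∀ k ≤ D ε, θ k = 0) →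
      ∑ k ∈ Finset.Icc 1 (D ε), (θ k)^2
          ≤ Cmin * ε^2 * Real.sqrt (∑ k ∈ Finset.Icc 1 (D ε), ((b k)^4)⁻¹) →
      ENNReal.ofReal β < P θ {ω | Δ ε ω = false})
    (H : Set (ℕ → ℝ))
    (hdec : ∀ θ ∈ H, ∀ n : ℕ, (fun k => if n < k then θ k else 0) ∈ H)
    (hHMS : H ⊆ {θ : ℕ → ℝ | (Summable fun k => (θ k)^2) ∧ θ 0 = 0 ∧
        ∀ ε ∈ Set.Ioo (0:ℝ) 1, (r ε)^2 ≤ ∑' k, (θ k)^2 →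
          P θ {ω | Δ ε ω = false} ≤ ENNReal.ofReal β}) :
    ∀ θ ∈ H, ∀ ε ∈ Set.Ioo (0:ℝ) 1,
      (∑' k, if D ε < k then (θ k)^2 else 0)
        < 2 * (r ε)^2
            - Cmin * ε^2 * Real.sqrt (∑ k ∈ Finset.Icc 1 (D ε), ((b k)^4)⁻¹) := by
  intro θ hθ ε hε
  set S := Real.sqrt (∑ k ∈ Finset.Icc 1 (D ε), ((b k)^4)⁻¹) with hS
  set θ' : ℕ → ℝ := fun k => if D ε < k then θ k else 0 with hθ'
  have hθ'H : θ' ∈ H := hdec θ hθ (D ε)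
  obtain ⟨hsum, h0, hms⟩ := hHMS hθ'H
  have hzero : ∀ k ≤ D ε, θ' k = 0 := fun k hk => if_neg (not_lt.mpr hk)
  have hSnn : 0 ≤ Cmin * ε^2 * S := by positivity
  have hsum0 : ∑ k ∈ Finset.Icc 1 (D ε), (θ' k)^2 ≤ Cmin * ε^2 * S := by
    have : ∑ k ∈ Finset.Icc 1 (D ε), (θ' k)^2 = 0 :=
      Finset.sum_eq_zero fun k hk => by
        rw [hzero k (Finset.mem_Icc.mp hk).2]; ring
    linarith
  have hb2' := hb2 ε hε θ' hzero hsum0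
  have hlt : ∑' k, (θ' k)^2 < (r ε)^2 := by
    by_contra h
    exact absurd hb2' (not_lt.mpr (hms ε hε (le_of_not_gt h)))
  have heq : (∑' k, if D ε < k then (θ k)^2 else 0) = ∑' k, (θ' k)^2 := by
    congr 1; ext k
    by_cases hk : D ε < k <;> simp [hθ', hk]
  have key : Cmin * ε^2 * S < (r ε)^2 := by
    have h1 := ha ε hε
    have h2 : 0 ≤ ε^2 * S := by positivity
    nlinarith
  rw [heq]
  linarith
end
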